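/- Let C, C' be neighbouring columns of D of height t with C to the left of C'. Then every box b of D lying in rows R_1,…,R_t strictly between C and C' has exactly one left-going line of ℓ(D) labelled 1, and the left end-point of this line lies in rows R_1,…,R_t in a column from C (inclusive) up to but excluding C'. -/

import Mathlib

open scoped Classical

/-- height of column `j` of the diagram (columns numbered from 1). -/
def hgt (c : List ℕ) (j : ℕ) : ℕ := c.getD (j - 1) 0

/-- number of boxes in the columns strictly to the left of column `j`. -/
def off (c : List ℕ) (j : ℕ) : ℕ := (c.take (j - 1)).sum

/-- `(i, j)` (row `i`, column `j`) is a box of the diagram `D`. -/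
def IsBox (c : List ℕ) (i j : ℕ) : Prop :=
  1 ≤ j ∧ j ≤ c.length ∧ 1 ≤ i ∧ i ≤ hgt c j

/-- the entry of the box `(i, j)` in the tableau `T`. -/
def Tentry (c : List ℕ) (i j : ℕ) : ℕ := off c j + i

/-- the column of the box of `D` carrying entry `m` in `T`. -/
noncomputable def colOf (c : List ℕ) (m : ℕ) : ℕ := sInf {j | m ≤ (c.take j).sum}

/-- the row of the box of `D` carrying entry `m` in `T`. -/
noncomputable def rowOf (c : List ℕ) (m : ℕ) : ℕ := m - off c (colOf c m)

/-- the total order `≼` on entries: increasing down columns, then from right to left. -/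
def ple (c : List ℕ) (a b : ℕ) : Prop :=
  colOf c b < colOf c a ∨ (colOf c a = colOf c b ∧ a ≤ b)

/-- the strict version of `≼`. -/
def plt (c : List ℕ) (a b : ℕ) : Prop :=
  colOf c b < colOf c a ∨ (colOf c a = colOf c b ∧ a < b)

/-- column `j` has a left neighbour in `D`. -/
def HasLeftNb (c : List ℕ) (j : ℕ) : Prop :=
  ∃ i, 1 ≤ i ∧ i < j ∧ hgt c i = hgt c j ∧
    ∀ i', i < i' → i' < j → hgt c i' ≠ hgt c j

/-- the `j`-th column of the tableau `T`, rows to optional entries. -/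
def Tcol (c : List ℕ) (j : ℕ) : ℕ → Option ℕ := fun i =>
  if 1 ≤ i ∧ i ≤ hgt c j then some (Tentry c i j) else none

/-- one step of the propagation rule building `T(∞)`: the entry (if any) in row `t`
of column `j - 1` of `T(∞)` (given by `prev`) is propagated into the partially
built column `j` (given by `cur`). -/
noncomputable def propStep (c : List ℕ) (j : ℕ) (prev : ℕ → Option ℕ)
    (cur : ℕ → Option ℕ) (t : ℕ) : ℕ → Option ℕ :=
  match prev t with
  | none => cur
  | some l =>
    if hgt c j = t then
      if HasLeftNb c j ∧ cur (t + 1) = none then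
        Function.update cur (t + 1) (some l)
      else cur
    else
      if cur t = none then Function.update cur t (some l) else cur

/-- the `j`-th column of the composition tableau `T(∞)`. -/
noncomputable def TinfCol (c : List ℕ) : ℕ → ℕ → Option ℕ
  | 0 => fun _ => none
  | 1 => Tcol c 1
  | j + 2 =>
      (List.range (c.sum + 2)).foldl
        (propStep c (j + 2) (TinfCol c (j + 1))) (Tcol c (j + 2))

/-- labels of lines: `1` or `∗`. -/
inductive Lab : Type
  | one : Lab
  | star : Lab
deriving DecidableEq

/-- maximal height among the columns `1, …, j - 1`. -/
def maxHgt (c : List ℕ) (j : ℕ) : ℕ := (c.take (j - 1)).foldr max 0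

/-- the maximal column height of the diagram `D`. -/
def maxH (c : List ℕ) : ℕ := c.foldr max 0

/-- `LineB c a i j lab` : the line family `ℓ(D)` contains a line labelled `lab`
whose left end-point is the box of `D` carrying entry `a` in `T` and whose right
end-point is the box `(i, j)` (row `i` of column `C_j`). -/
def LineB (c : List ℕ) (a i j : ℕ) (lab : Lab) : Prop :=
  2 ≤ j ∧ j ≤ c.length ∧ 1 ≤ i ∧
    (match lab with
     | Lab.one =>
         (maxHgt c j < hgt c j ∧ i ≤ maxHgt c j + 1 ∧ TinfCol c (j - 1) i = some a)
       ∨ (hgt c j ≤ maxHgt c j ∧ i + 1 ≤ hgt c j ∧ TinfCol c (j - 1) i = some a)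
       ∨ (hgt c j ≤ maxHgt c j ∧ i = hgt c j ∧
           ¬(∃ j', 1 ≤ j' ∧ j' < j ∧ hgt c j' = hgt c j) ∧
           TinfCol c (j - 1) i = some a)
       ∨ (hgt c j ≤ maxHgt c j ∧ i = hgt c j ∧
           (∃ j', 1 ≤ j' ∧ j' < j ∧ hgt c j' = hgt c j) ∧
           TinfCol c (j - 1) (i + 1) = some a)
     | Lab.star =>
         hgt c j ≤ maxHgt c j ∧ i = hgt c j ∧
           (∃ j', 1 ≤ j' ∧ j' < j ∧ hgt c j' = hgt c j) ∧
           TinfCol c (j - 1) i = some a)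

/-- `LineE c a b lab` : `ℓ(D)` contains a line labelled `lab` joining the box of `D`
carrying entry `a` in `T` (on the left) to the box carrying entry `b` (on the right). -/
def LineE (c : List ℕ) (a b : ℕ) (lab : Lab) : Prop :=
  ∃ i j, LineB c a i j lab ∧ b = Tentry c i j

/-- the box `(i, j)` of `D` is right extremal relative to `ℓ(D)`. -/
def RExt (c : List ℕ) (i j : ℕ) : Prop :=
  IsBox c i j ∧ ∀ i' j', ¬ LineB c (Tentry c i j) i' j' Lab.one

/-- `c` is a composition of `n`. -/
def IsComposition (c : List ℕ) (n : ℕ) : Prop :=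
  c.sum = n ∧ ∀ x ∈ c, 0 < x


section Statement7Aux

theorem propStep_cases (c : List ℕ) (j : ℕ) (prev cur : ℕ → Option ℕ) (t r : ℕ) :
    propStep c j prev cur t r = cur r ∨
    (∃ l, prev t = some l ∧ r = t + 1 ∧ hgt c j = t ∧ cur r = none ∧
      propStep c j prev cur t r = some l) ∨
    (∃ l, prev t = some l ∧ r = t ∧ hgt c j ≠ t ∧ cur r = none ∧
      propStep c j prev cur t r = some l) := by
  cases hpt : prev t with
  | none => left; simp [propStep, hpt]
  | some l =>
    by_cases h1 : hgt c j = t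
    · by_cases h2 : HasLeftNb c j ∧ cur (t + 1) = none
      · by_cases hr : r = t + 1
        · subst hr
          exact Or.inr (Or.inl ⟨l, rfl, rfl, h1, h2.2, by
            simp [propStep, hpt, h1, h2]⟩)
        · left; simp [propStep, hpt, h1, h2, Function.update_apply, hr]
      · left; simp [propStep, hpt, h1, h2]
    · by_cases h3 : cur t = none
      · by_cases hr : r = t
        · subst hr
          exact Or.inr (Or.inr ⟨l, rfl, rfl, h1, h3, by
            simp [propStep, hpt, h1, h3]⟩)
        · left; simp [propStep, hpt, h1, h3, Function.update_apply, hr]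
      · left; simp [propStep, hpt, h1, h3]

theorem propStep_pres (c : List ℕ) (j : ℕ) (prev cur : ℕ → Option ℕ) (t r : ℕ)
    (h : cur r ≠ none) : propStep c j prev cur t r = cur r := by
  rcases propStep_cases c j prev cur t r with h1 | ⟨l, _, _, _, h1, _⟩ | ⟨l, _, _, _, h1, _⟩
  · exact h1
  · exact absurd h1 h
  · exact absurd h1 h

theorem propStep_fill (c : List ℕ) (j : ℕ) (prev cur : ℕ → Option ℕ) (t : ℕ) (l : ℕ)
    (h1 : prev t = some l) (h2 : hgt c j ≠ t) (h3 : cur t = none) :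
    propStep c j prev cur t t = some l := by
  simp [propStep, h1, h2, h3]

theorem foldl_pres (c : List ℕ) (j : ℕ) (prev : ℕ → Option ℕ) (l : List ℕ) :
    ∀ cur : ℕ → Option ℕ, ∀ r, cur r ≠ none →
      l.foldl (propStep c j prev) cur r = cur r := by
  induction l with
  | nil => intro cur r _; rfl
  | cons a l ih =>
    intro cur r h
    have h2 : propStep c j prev cur a r = cur r := propStep_pres c j prev cur a r h
    rw [List.foldl_cons, ih _ r (by rw [h2]; exact h), h2]

theorem foldl_fill (c : List ℕ) (j : ℕ) (prev : ℕ → Option ℕ) (t : ℕ)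
    (hh : hgt c j ≠ t) (hp : prev t ≠ none) :
    ∀ N, t < N → ∀ cur, ((List.range N).foldl (propStep c j prev) cur) t ≠ none := by
  intro N
  induction N with
  | zero => omega
  | succ N ih =>
    intro hN cur
    rw [List.range_succ, List.foldl_append, List.foldl_cons, List.foldl_nil]
    set cur' := (List.range N).foldl (propStep c j prev) cur with hcur'
    rcases Nat.lt_or_ge t N with h | h
    · have hne : cur' t ≠ none := ih h cur
      rw [propStep_pres c j prev cur' N t hne]
      exact hne
    · have ht : t = N := by omega
      subst ht
      by_cases hc : cur' t = none
      · obtain ⟨l, hl⟩ := Option.ne_none_iff_exists'.mp hp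
        rw [propStep_fill c j prev cur' t l hl hh hc]
        simp
      · rw [propStep_pres c j prev cur' t t hc]
        exact hc

theorem foldl_good (c : List ℕ) (j tt : ℕ) (G : ℕ → Prop) (hg : 1 ≤ hgt c j)
    (prev : ℕ → Option ℕ)
    (hprev : ∀ s x, 1 ≤ s → s ≤ tt → prev s = some x → G x) (l : List ℕ) :
    ∀ cur, (∀ r x, 1 ≤ r → r ≤ tt → cur r = some x → G x) →
      ∀ r x, 1 ≤ r → r ≤ tt → (l.foldl (propStep c j prev) cur) r = some x → G x := by
  induction l with
  | nil => intro cur hcur r x h1 h2 h3; exact hcur r x h1 h2 h3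
  | cons a l ih =>
    intro cur hcur
    rw [List.foldl_cons]
    apply ih
    intro r x h1 h2 h3
    rcases propStep_cases c j prev cur a r with he | ⟨l', hl', hr, hha, _, hv⟩ | ⟨l', hl', hr, _, _, hv⟩
    · exact hcur r x h1 h2 (he ▸ h3)
    · have : l' = x := by rw [hv] at h3; exact Option.some.inj h3
      subst this
      exact hprev a l' (by omega) (by omega) hl'
    · have : l' = x := by rw [hv] at h3; exact Option.some.inj h3
      subst this
      exact hprev a l' (by omega) (by omega) hl'

theorem TinfCol_succ' (c : List ℕ) (j : ℕ) (hj : 2 ≤ j) :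
    TinfCol c j = (List.range (c.sum + 2)).foldl
      (propStep c j (TinfCol c (j - 1))) (Tcol c j) := by
  obtain ⟨m, rfl⟩ : ∃ m, j = m + 2 := ⟨j - 2, by omega⟩
  rfl

theorem TinfCol_low (c : List ℕ) (j r : ℕ) (hj : 1 ≤ j) (hr1 : 1 ≤ r)
    (hr2 : r ≤ hgt c j) : TinfCol c j r = some (Tentry c r j) := by
  have hT : Tcol c j r = some (Tentry c r j) := by simp [Tcol, hr1, hr2]
  rcases Nat.lt_or_ge j 2 with h | h
  · have hj1 : j = 1 := by omega
    subst hj1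
    exact hT
  · rw [TinfCol_succ' c j h,
      foldl_pres c j (TinfCol c (j - 1)) _ (Tcol c j) r (by rw [hT]; simp), hT]

theorem sum_take_mono (c : List ℕ) {a b : ℕ} (h : a ≤ b) :
    (c.take a).sum ≤ (c.take b).sum := by
  conv_rhs => rw [← List.take_append_drop a (c.take b)]
  rw [List.sum_append, List.take_take, min_eq_left h]
  exact Nat.le_add_right _ _

theorem colOf_Tentry (c : List ℕ) (r j : ℕ) (hj1 : 1 ≤ j) (hj2 : j ≤ c.length)
    (hr1 : 1 ≤ r) (hr2 : r ≤ hgt c j) : colOf c (Tentry c r j) = j := by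
  have hlen : j - 1 < c.length := by omega
  have hsum : (c.take j).sum = (c.take (j - 1)).sum + c.getD (j - 1) 0 := by
    have h0 := List.sum_take_succ c (j - 1) hlen
    have hj' : j - 1 + 1 = j := by omega
    rw [hj'] at h0
    rw [h0, List.getD_eq_getElem c 0 hlen]
  have hmem : Tentry c r j ≤ (c.take j).sum := by
    rw [Tentry, off, hsum]
    unfold hgt at hr2
    omega
  have hlb : ∀ m ∈ {j' | Tentry c r j ≤ (c.take j').sum}, j ≤ m := by
    intro m hm
    by_contra hlt
    push_neg at hlt
    have h1 : (c.take m).sum ≤ (c.take (j - 1)).sum := sum_take_mono c (by omega)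
    have h2 : Tentry c r j ≤ (c.take (j - 1)).sum := le_trans hm h1
    rw [Tentry, off] at h2
    omega
  exact le_antisymm (Nat.sInf_le hmem) (le_csInf ⟨j, hmem⟩ hlb)

theorem rowOf_Tentry (c : List ℕ) (r j : ℕ) (hj1 : 1 ≤ j) (hj2 : j ≤ c.length)
    (hr1 : 1 ≤ r) (hr2 : r ≤ hgt c j) : rowOf c (Tentry c r j) = r := by
  rw [rowOf, colOf_Tentry c r j hj1 hj2 hr1 hr2, Tentry]
  omega

theorem le_foldr_max (l : List ℕ) (x : ℕ) (h : x ∈ l) : x ≤ l.foldr max 0 := by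
  induction l with
  | nil => cases h
  | cons a l ih =>
    rcases List.mem_cons.mp h with rfl | h
    · exact le_max_left _ _
    · exact le_trans (ih h) (le_max_right _ _)

theorem hgt_le_maxHgt (c : List ℕ) (p j : ℕ) (h1 : 1 ≤ p) (h2 : p < j)
    (h3 : p ≤ c.length) : hgt c p ≤ maxHgt c j := by
  have hp : p - 1 < c.length := by omega
  have hlt : p - 1 < (c.take (j - 1)).length := by
    rw [List.length_take]; omega
  have he : hgt c p = (c.take (j - 1))[p - 1]'hlt := by
    rw [hgt, List.getD_eq_getElem c 0 hp]
    exact (List.getElem_take).symm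
  rw [he]
  exact le_foldr_max _ _ (List.getElem_mem hlt)

end Statement7Aux

/-- let `C = C_p`, `C' = C_q` be neighbouring columns of `D` of height
`tt` with `C` to the left of `C'`.  Every box of `D` lying in rows `R_1, …, R_tt`
strictly between `C` and `C'` has exactly one left-going line of `ℓ(D)` labelled
`1`, and the left end-point of this line lies in rows `R_1, …, R_tt` in a column
from `C` (inclusive) up to but excluding `C'`. -/
theorem statement7 (n : ℕ) (hn : 0 < n) (c : List ℕ) (hc : IsComposition c n)
    (p q tt : ℕ) (hp : 1 ≤ p) (hq : q ≤ c.length) (hpq : p < q)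
    (hhp : hgt c p = tt) (hhq : hgt c q = tt)
    (hnbr : ∀ j, p < j → j < q → hgt c j ≠ tt) :
    ∀ i j, p < j → j < q → IsBox c i j → i ≤ tt →
      (∃! a, LineB c a i j Lab.one) ∧
      (∀ a, LineB c a i j Lab.one →
        rowOf c a ≤ tt ∧ p ≤ colOf c a ∧ colOf c a < q) := by
  obtain ⟨hsum, hpos⟩ := hc
  have hlen : ∀ j', 1 ≤ j' → j' ≤ c.length → 1 ≤ hgt c j' := by
    intro j' h1 h2
    have hl : j' - 1 < c.length := by omega
    rw [hgt, List.getD_eq_getElem c 0 hl]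
    exact hpos _ (List.getElem_mem _)
  have hplen : p ≤ c.length := by omega
  have htt1 : 1 ≤ tt := hhp ▸ hlen p hp hplen
  have httsum : tt ≤ c.sum := by
    have hl : p - 1 < c.length := by omega
    have hmem : hgt c p ∈ c := by
      rw [hgt, List.getD_eq_getElem c 0 hl]
      exact List.getElem_mem _
    calc tt = hgt c p := hhp.symm
    _ ≤ c.sum := List.single_le_sum (fun x _ => Nat.zero_le x) _ hmem
  have INV : ∀ j1, p ≤ j1 → j1 < q → ∀ r, 1 ≤ r → r ≤ tt →
      ∃ x, TinfCol c j1 r = some x ∧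
        ∃ r' j'', p ≤ j'' ∧ j'' ≤ j1 ∧ 1 ≤ r' ∧ r' ≤ tt ∧ r' ≤ hgt c j'' ∧
          x = Tentry c r' j'' := by
    intro j1 hj1
    induction j1, hj1 using Nat.le_induction with
    | base =>
      intro _ r hr1 hr2
      exact ⟨Tentry c r p, TinfCol_low c p r hp hr1 (by omega),
        r, p, le_refl p, le_refl p, hr1, hr2, by omega, rfl⟩
    | succ j1 hj1 ih =>
      intro hq' r hr1 hr2
      have hq1 : j1 < q := by omega
      have hjlen : j1 + 1 ≤ c.length := by omega
      have hh1 : 1 ≤ hgt c (j1 + 1) := hlen _ (by omega) hjlen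
      by_cases hcase : r ≤ hgt c (j1 + 1)
      · exact ⟨Tentry c r (j1 + 1), TinfCol_low c (j1 + 1) r (by omega) hr1 hcase,
          r, j1 + 1, by omega, le_refl _, hr1, hr2, hcase, rfl⟩
      · push_neg at hcase
        have h2j : 2 ≤ j1 + 1 := by omega
        have heq := TinfCol_succ' c (j1 + 1) h2j
        simp only [Nat.add_sub_cancel] at heq
        have hprev : TinfCol c j1 r ≠ none := by
          obtain ⟨x, hx, _⟩ := ih hq1 r hr1 hr2
          rw [hx]; simp
        have hfill : TinfCol c (j1 + 1) r ≠ none := by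
          rw [heq]
          exact foldl_fill c (j1 + 1) (TinfCol c j1) r (by omega) hprev
            (c.sum + 2) (by omega) (Tcol c (j1 + 1))
        obtain ⟨x, hx⟩ := Option.ne_none_iff_exists'.mp hfill
        refine ⟨x, hx, ?_⟩
        have hgoodprev : ∀ s y, 1 ≤ s → s ≤ tt → TinfCol c j1 s = some y →
            ∃ r' j'', p ≤ j'' ∧ j'' ≤ j1 + 1 ∧ 1 ≤ r' ∧ r' ≤ tt ∧
              r' ≤ hgt c j'' ∧ y = Tentry c r' j'' := by
          intro s y hs1 hs2 hsy
          obtain ⟨x', hx', r', j'', h1, h2, h3, h4, h5, h6⟩ := ih hq1 s hs1 hs2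
          rw [hsy] at hx'
          obtain rfl : y = x' := Option.some.inj hx'
          exact ⟨r', j'', h1, by omega, h3, h4, h5, h6⟩
        have hgoodcur : ∀ r' y, 1 ≤ r' → r' ≤ tt → Tcol c (j1 + 1) r' = some y →
            ∃ r'' j'', p ≤ j'' ∧ j'' ≤ j1 + 1 ∧ 1 ≤ r'' ∧ r'' ≤ tt ∧
              r'' ≤ hgt c j'' ∧ y = Tentry c r'' j'' := by
          intro r' y h1 h2 hy
          rw [Tcol] at hy
          split_ifs at hy with hcond
          exact ⟨r', j1 + 1, by omega, le_refl _, h1, h2, hcond.2,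
              (Option.some.inj hy).symm⟩
        exact foldl_good c (j1 + 1) tt _ hh1 (TinfCol c j1) hgoodprev
          (List.range (c.sum + 2)) (Tcol c (j1 + 1)) hgoodcur r x hr1 hr2
          (by rw [← heq]; exact hx)
  intro i j hpj hjq hbox hitt
  obtain ⟨hj1, hjle, hi1, hile⟩ := hbox
  have h2j : 2 ≤ j := by omega
  have hmax : tt ≤ maxHgt c j := by
    rw [← hhp]; exact hgt_le_maxHgt c p j hp hpj hplen
  have hne : hgt c j ≠ tt := hnbr j hpj hjq
  have iffkey : ∃ r0, 1 ≤ r0 ∧ r0 ≤ tt ∧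
      ∀ a, LineB c a i j Lab.one ↔ TinfCol c (j - 1) r0 = some a := by
    rcases Nat.lt_or_ge (maxHgt c j) (hgt c j) with hmlt | hmge
    · refine ⟨i, hi1, hitt, fun a => ⟨?_, ?_⟩⟩
      · rintro ⟨_, _, _, hd⟩
        rcases hd with ⟨_, _, h⟩ | ⟨h, _⟩ | ⟨h, _⟩ | ⟨h, _⟩
        · exact h
        all_goals omega
      · intro ha
        exact ⟨h2j, hjle, hi1, Or.inl ⟨hmlt, by omega, ha⟩⟩
    · rcases Nat.lt_or_ge i (hgt c j) with hilt | hige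
      · refine ⟨i, hi1, hitt, fun a => ⟨?_, ?_⟩⟩
        · rintro ⟨_, _, _, hd⟩
          rcases hd with ⟨h, _⟩ | ⟨_, _, h⟩ | ⟨_, h, _⟩ | ⟨_, h, _⟩
          · omega
          · exact h
          all_goals omega
        · intro ha
          exact ⟨h2j, hjle, hi1, Or.inr (Or.inl ⟨hmge, by omega, ha⟩)⟩
      · have hieq : i = hgt c j := by omega
        have hlt : hgt c j < tt := by omega
        by_cases E : ∃ j', 1 ≤ j' ∧ j' < j ∧ hgt c j' = hgt c j
        · refine ⟨i + 1, by omega, by omega, fun a => ⟨?_, ?_⟩⟩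
          · rintro ⟨_, _, _, hd⟩
            rcases hd with ⟨h, _⟩ | ⟨_, h, _⟩ | ⟨_, _, h, _⟩ | ⟨_, _, _, h⟩
            · omega
            · omega
            · exact absurd E h
            · exact h
          · intro ha
            exact ⟨h2j, hjle, hi1, Or.inr (Or.inr (Or.inr ⟨hmge, hieq, E, ha⟩))⟩
        · refine ⟨i, hi1, hitt, fun a => ⟨?_, ?_⟩⟩
          · rintro ⟨_, _, _, hd⟩
            rcases hd with ⟨h, _⟩ | ⟨_, h, _⟩ | ⟨_, _, _, h⟩ | ⟨_, _, hE, _⟩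
            · omega
            · omega
            · exact h
            · exact absurd hE E
          · intro ha
            exact ⟨h2j, hjle, hi1, Or.inr (Or.inr (Or.inl ⟨hmge, hieq, E, ha⟩))⟩
  obtain ⟨r0, hr01, hr0tt, hiff⟩ := iffkey
  obtain ⟨x, hx, r', j'', hj''p, hj''le, hr'1, hr'tt, hr'h, hxe⟩ :=
    INV (j - 1) (by omega) (by omega) r0 hr01 hr0tt
  constructor
  · refine ⟨x, (hiff x).mpr hx, fun b hb => ?_⟩
    have hb' := (hiff b).mp hb
    rw [hx] at hb'
    exact (Option.some.inj hb').symm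
  · intro a ha
    have ha' := (hiff a).mp ha
    rw [hx] at ha'
    obtain rfl : x = a := Option.some.inj ha'
    subst hxe
    have hj''len : j'' ≤ c.length := by omega
    rw [rowOf_Tentry c r' j'' (by omega) hj''len hr'1 hr'h,
        colOf_Tentry c r' j'' (by omega) hj''len hr'1 hr'h]
    omega
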